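/- Let κ > 0 and n ∈ ℕ, let y_n := 2^{−2/3}·(2n+1)^{4/3}·( ((1 + κ_n)^{1/2} + 1)^{1/3} − ((1 + κ_n)^{1/2} − 1)^{1/3} ) with κ_n := (16/27)·κ³·(2n+1)^{−2}, and set y_{n,±} := (4·(2n+1)²·(2y_n)^{−3/2} ± 1)^{1/2} (both well-defined nonnegative reals). Define the four complex numbers λ₁ := (1/2)·(2y_n)^{1/2}·(1 − y_{n,−}), λ₂ := (1/2)·(2y_n)^{1/2}·(1 + y_{n,−}), λ₃ := −(1/2)·(2y_n)^{1/2}·(1 − i·y_{n,+}), and λ₄ := conjugate of λ₃. Then: (a) each λ_j satisfies λ⁴ − 2·(2n+1)²·λ − (2n+1)²·κ = 0; (b) λ₁ is real and lies in the open interval (−κ/2, 0); (c) Re λ₃ = −(1/2)·(2y_n)^{1/2} and −2^{−2/3}·(2n+1)^{2/3} < Re λ₃ < 0. -/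

import Mathlib

set_option maxHeartbeats 1000000

lemma cube13 {x : ℝ} (hx : 0 ≤ x) : (x ^ ((1:ℝ)/3)) ^ 3 = x := by
  rw [show (1:ℝ)/3 = ((3:ℕ):ℝ)⁻¹ by norm_num]
  exact Real.rpow_inv_natCast_pow hx (by norm_num)

lemma cubic_aux (κ m κn yn : ℝ) (hκ : 0 < κ) (hm0 : 0 < m)
    (hκn : κn = 16 / 27 * κ ^ 3 / m ^ 2)
    (hyn : yn = (2 : ℝ) ^ (-(2 : ℝ) / 3) * m ^ ((4 : ℝ) / 3) *
        (((1 + κn) ^ ((1 : ℝ) / 2) + 1) ^ ((1 : ℝ) / 3)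
          - ((1 + κn) ^ ((1 : ℝ) / 2) - 1) ^ ((1 : ℝ) / 3))) :
    0 < yn ∧ 2 * yn ^ 3 + 2 * m ^ 2 * κ * yn = m ^ 4 := by
  have hκn0 : 0 < κn := by rw [hκn]; positivity
  set p : ℝ := 1 + κn with hp
  have hp0 : (0:ℝ) ≤ p := by positivity
  have hsp1 : 1 < p ^ ((1:ℝ)/2) := by
    have := Real.one_lt_rpow_iff_of_pos (x := p) (y := (1:ℝ)/2) (by linarith)
    exact this.mpr (Or.inl ⟨by linarith, by norm_num⟩)
  set A : ℝ := p ^ ((1:ℝ)/2) + 1 with hA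
  set B : ℝ := p ^ ((1:ℝ)/2) - 1 with hB
  have hA0 : 0 < A := by rw [hA]; linarith
  have hB0 : 0 < B := by rw [hB]; linarith
  set a : ℝ := A ^ ((1:ℝ)/3) with ha
  set b : ℝ := B ^ ((1:ℝ)/3) with hb
  have ha0 : 0 ≤ a := Real.rpow_nonneg hA0.le _
  have hb0 : 0 ≤ b := Real.rpow_nonneg hB0.le _
  have ha3 : a ^ 3 = A := cube13 hA0.le
  have hb3 : b ^ 3 = B := cube13 hB0.le
  have hsq : (p ^ ((1:ℝ)/2)) ^ 2 = p := by
    rw [show (1:ℝ)/2 = ((2:ℕ):ℝ)⁻¹ by norm_num]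
    exact Real.rpow_inv_natCast_pow hp0 (by norm_num)
  have hab3 : (a*b) ^ 3 = κn := by
    rw [mul_pow, ha3, hb3]
    have h1 : A * B = p - 1 := by rw [hA, hB]; nlinarith [hsq]
    rw [h1, hp]; ring
  have hblta : b < a := by
    have h3 : b ^ 3 < a ^ 3 := by rw [ha3, hb3, hA, hB]; linarith
    nlinarith [sq_nonneg (a+b), sq_nonneg (a-b)]
  have h2c : ((2:ℝ) ^ ((4:ℝ)/3)) ^ 3 = 16 := by
    rw [← Real.rpow_natCast ((2:ℝ) ^ ((4:ℝ)/3)) 3, ← Real.rpow_mul (by norm_num)]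
    norm_num
  have hmc : (m ^ ((2:ℝ)/3)) ^ 3 = m ^ 2 := by
    rw [← Real.rpow_natCast (m ^ ((2:ℝ)/3)) 3, ← Real.rpow_mul hm0.le]
    norm_num
  have hm23 : 0 < m ^ ((2:ℝ)/3) := Real.rpow_pos_of_pos hm0 _
  have ht : a * b = 2 ^ ((4:ℝ)/3) / 3 * κ / m ^ ((2:ℝ)/3) := by
    have hr0 : (0:ℝ) ≤ 2 ^ ((4:ℝ)/3) / 3 * κ / m ^ ((2:ℝ)/3) := by positivity
    refine (pow_left_inj₀ (mul_nonneg ha0 hb0) hr0 (three_ne_zero)).mp ?_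
    rw [hab3, div_pow, mul_pow, div_pow, h2c, hmc, hκn]
    ring
  -- constants
  have hCc : ((2:ℝ) ^ (-(2:ℝ)/3)) ^ 3 = 1/4 := by
    rw [← Real.rpow_natCast ((2:ℝ) ^ (-(2:ℝ)/3)) 3, ← Real.rpow_mul (by norm_num)]
    norm_num
  have hm43 : (m ^ ((4:ℝ)/3)) ^ 3 = m ^ 4 := by
    rw [← Real.rpow_natCast (m ^ ((4:ℝ)/3)) 3, ← Real.rpow_mul hm0.le]
    norm_num
  -- m^2 * m^(4/3) relation with m^(2/3)
  have hmm : m ^ 2 * m ^ ((4:ℝ)/3) * (a*b) = 2 ^ ((4:ℝ)/3) / 3 * κ * m ^ 2 * m ^ ((4:ℝ)/3) / m ^ ((2:ℝ)/3) := by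
    rw [ht]; ring
  have hsplit : m ^ ((4:ℝ)/3) = m ^ ((2:ℝ)/3) * m ^ ((2:ℝ)/3) := by
    rw [← Real.rpow_add hm0]; norm_num
  have h2split : (2:ℝ) ^ ((4:ℝ)/3) * (2:ℝ) ^ (-(2:ℝ)/3) = 2 ^ ((2:ℝ)/3) := by
    rw [← Real.rpow_add (by norm_num)]; norm_num
  have hC0 : (0:ℝ) < (2:ℝ) ^ (-(2:ℝ)/3) := by positivity
  have hm430 : 0 < m ^ ((4:ℝ)/3) := Real.rpow_pos_of_pos hm0 _
  constructor
  · rw [hyn]; have : 0 < a - b := by linarith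
    positivity
  · -- key identity
    rw [hyn]
    -- yn = C * (a-b), C := 2^(-2/3) * m^(4/3)
    -- 2*C^3*(a-b)^3 + 2*m^2*κ*C*(a-b) = m^4
    -- (a-b)^3 = 2 - 3*(a*b)*(a-b)  [since a^3-b^3 = A-B = 2]
    have hab2 : a^3 - b^3 = 2 := by rw [ha3, hb3, hA, hB]; ring
    -- final: nlinarith? build via ring manipulations
    have expand : (2 ^ (-(2:ℝ)/3) * m ^ ((4:ℝ)/3) * (a-b))^3
        = (2 ^ (-(2:ℝ)/3))^3 * (m ^ ((4:ℝ)/3))^3 * ((a^3 - b^3) - 3*(a*b)*(a-b)) := by ring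
    rw [show (2:ℝ) * (2 ^ (-(2:ℝ)/3) * m ^ ((4:ℝ)/3) * (a - b)) ^ 3
          + 2 * m ^ 2 * κ * (2 ^ (-(2:ℝ)/3) * m ^ ((4:ℝ)/3) * (a - b))
        = 2 * ((2 ^ (-(2:ℝ)/3))^3 * (m ^ ((4:ℝ)/3))^3 * ((a^3 - b^3) - 3*(a*b)*(a-b)))
          + 2 * m ^ 2 * κ * 2 ^ (-(2:ℝ)/3) * m ^ ((4:ℝ)/3) * (a - b) from by rw [← expand]; ring]
    rw [hCc, hm43, hab2, ht]
    field_simp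
    have hm2 : m ^ ((4:ℝ)/3) * m ^ ((2:ℝ)/3) = m ^ 2 := by
      rw [← Real.rpow_add hm0]
      norm_num
    have h24 : (2:ℝ) ^ ((4:ℝ)/3) = 4 * 2 ^ (-(2:ℝ)/3) := by
      rw [show ((4:ℝ)/3) = 2 + (-(2:ℝ)/3) by norm_num, Real.rpow_add (by norm_num)]
      norm_num
    simp only [neg_div] at h24 ⊢
    linear_combination (-2*m^2*κ*(a-b)) * h24 + (8*2 ^ (-((2:ℝ)/3))*κ*(a-b)) * hm2

theorem stmt16 (κ : ℝ) (hκ : 0 < κ) (n : ℕ) (m κn yn ynm ynp : ℝ)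
    (lam₁ lam₂ : ℝ) (lam₃ lam₄ : ℂ)
    (hm : m = 2 * (n : ℝ) + 1)
    (hκn : κn = 16 / 27 * κ ^ 3 / m ^ 2)
    (hyn : yn = (2 : ℝ) ^ (-(2 : ℝ) / 3) * m ^ ((4 : ℝ) / 3) *
        (((1 + κn) ^ ((1 : ℝ) / 2) + 1) ^ ((1 : ℝ) / 3)
          - ((1 + κn) ^ ((1 : ℝ) / 2) - 1) ^ ((1 : ℝ) / 3)))
    (hynm : ynm = Real.sqrt (4 * m ^ 2 * (2 * yn) ^ (-(3 : ℝ) / 2) - 1))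
    (hynp : ynp = Real.sqrt (4 * m ^ 2 * (2 * yn) ^ (-(3 : ℝ) / 2) + 1))
    (hl1 : lam₁ = 1 / 2 * Real.sqrt (2 * yn) * (1 - ynm))
    (hl2 : lam₂ = 1 / 2 * Real.sqrt (2 * yn) * (1 + ynm))
    (hl3 : lam₃ = -(1 / 2 : ℂ) * (Real.sqrt (2 * yn) : ℂ) * (1 - Complex.I * (ynp : ℂ)))
    (hl4 : lam₄ = starRingEnd ℂ lam₃) :
    ((lam₁ : ℂ) ^ 4 - 2 * (m : ℂ) ^ 2 * (lam₁ : ℂ) - (m : ℂ) ^ 2 * (κ : ℂ) = 0 ∧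
      (lam₂ : ℂ) ^ 4 - 2 * (m : ℂ) ^ 2 * (lam₂ : ℂ) - (m : ℂ) ^ 2 * (κ : ℂ) = 0 ∧
      lam₃ ^ 4 - 2 * (m : ℂ) ^ 2 * lam₃ - (m : ℂ) ^ 2 * (κ : ℂ) = 0 ∧
      lam₄ ^ 4 - 2 * (m : ℂ) ^ 2 * lam₄ - (m : ℂ) ^ 2 * (κ : ℂ) = 0) ∧
    (-κ / 2 < lam₁ ∧ lam₁ < 0) ∧
    (lam₃.re = -(1 / 2) * Real.sqrt (2 * yn) ∧
      -(2 : ℝ) ^ (-(2 : ℝ) / 3) * m ^ ((2 : ℝ) / 3) < lam₃.re ∧ lam₃.re < 0) := by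
  have hm0 : (0:ℝ) < m := by rw [hm]; positivity
  obtain ⟨hyn0, hcubic⟩ := cubic_aux κ m κn yn hκ hm0 hκn hyn
  have h2y0 : (0:ℝ) < 2 * yn := by linarith
  obtain ⟨s, hsdef⟩ : ∃ s : ℝ, Real.sqrt (2 * yn) = s := ⟨_, rfl⟩
  rw [hsdef] at hl1 hl2 hl3 ⊢
  have hs0 : 0 < s := hsdef ▸ Real.sqrt_pos.mpr h2y0
  have hs2 : s ^ 2 = 2 * yn := hsdef ▸ Real.sq_sqrt h2y0.le
  have hs6 : s ^ 6 + 4 * m ^ 2 * κ * s ^ 2 = 4 * m ^ 4 := by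
    have h : s ^ 6 = (s ^ 2) ^ 3 := by ring
    rw [h, hs2]
    linear_combination 4 * hcubic
  have hq : (2 * yn) ^ (-(3:ℝ)/2) * s ^ 3 = 1 := by
    have hs_r : s = (2 * yn) ^ ((1:ℝ)/2) := by
      rw [← hsdef, Real.sqrt_eq_rpow]
    rw [hs_r, ← Real.rpow_natCast ((2*yn) ^ ((1:ℝ)/2)) 3, ← Real.rpow_mul h2y0.le,
      ← Real.rpow_add h2y0]
    norm_num
  have hs3pos : 0 < s ^ 3 := pow_pos hs0 3
  have hs3lt : s ^ 3 < 2 * m ^ 2 := by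
    have hpos : 0 < 4 * m ^ 2 * κ * s ^ 2 := by positivity
    have h6lt : s ^ 6 < 4 * m ^ 4 := by linarith
    have hsq : (s ^ 3) ^ 2 < (2 * m ^ 2) ^ 2 := by nlinarith [h6lt]
    exact (pow_lt_pow_iff_left₀ hs3pos.le (by positivity) two_ne_zero).mp hsq
  have hqv : 4 * m ^ 2 * (2 * yn) ^ (-(3:ℝ)/2) * s ^ 3 = 4 * m ^ 2 := by
    calc 4 * m ^ 2 * (2 * yn) ^ (-(3:ℝ)/2) * s ^ 3
        = 4 * m ^ 2 * ((2 * yn) ^ (-(3:ℝ)/2) * s ^ 3) := by ring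
      _ = 4 * m ^ 2 := by rw [hq]; ring
  have hqgt2 : 2 < 4 * m ^ 2 * (2 * yn) ^ (-(3:ℝ)/2) := by
    nlinarith [hqv, hs3lt, hs3pos]
  have hu2 : ynm ^ 2 = 4 * m ^ 2 * (2 * yn) ^ (-(3:ℝ)/2) - 1 := by
    rw [hynm]; exact Real.sq_sqrt (by linarith)
  have hu0 : 0 ≤ ynm := by rw [hynm]; exact Real.sqrt_nonneg _
  have hv2 : ynp ^ 2 = 4 * m ^ 2 * (2 * yn) ^ (-(3:ℝ)/2) + 1 := by
    rw [hynp]; exact Real.sq_sqrt (by linarith)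
  have hu_s : s ^ 3 * ynm ^ 2 = 4 * m ^ 2 - s ^ 3 := by
    rw [hu2]; linear_combination hqv
  have hv_s : s ^ 3 * ynp ^ 2 = 4 * m ^ 2 + s ^ 3 := by
    rw [hv2]; linear_combination hqv
  have hu1 : 1 < ynm := by
    have h1 : 1 < ynm ^ 2 := by rw [hu2]; linarith
    nlinarith [h1, hu0]
  -- real quartic for lam₁ and lam₂
  have hs2ne : s ^ 2 ≠ 0 := by positivity
  have h11 : s * lam₁ ^ 2 = s ^ 2 * lam₁ - s ^ 3 / 2 + m ^ 2 := by
    rw [hl1]; linear_combination (1/4) * hu_s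
  have hq1 : lam₁ ^ 4 - 2 * m ^ 2 * lam₁ - m ^ 2 * κ = 0 := by
    have h2 : s ^ 2 * (lam₁ ^ 4 - 2 * m ^ 2 * lam₁ - m ^ 2 * κ) = 0 := by
      linear_combination (s * lam₁ ^ 2 + s ^ 2 * lam₁ + s ^ 3 / 2 + m ^ 2) * h11 - (1/4) * hs6
    exact (mul_eq_zero.mp h2).resolve_left hs2ne
  have h12 : s * lam₂ ^ 2 = s ^ 2 * lam₂ - s ^ 3 / 2 + m ^ 2 := by
    rw [hl2]; linear_combination (1/4) * hu_s
  have hq2 : lam₂ ^ 4 - 2 * m ^ 2 * lam₂ - m ^ 2 * κ = 0 := by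
    have h2 : s ^ 2 * (lam₂ ^ 4 - 2 * m ^ 2 * lam₂ - m ^ 2 * κ) = 0 := by
      linear_combination (s * lam₂ ^ 2 + s ^ 2 * lam₂ + s ^ 3 / 2 + m ^ 2) * h12 - (1/4) * hs6
    exact (mul_eq_zero.mp h2).resolve_left hs2ne
  -- complex quartic for lam₃
  have hs6c : (s:ℂ) ^ 6 + 4 * (m:ℂ) ^ 2 * (κ:ℂ) * (s:ℂ) ^ 2 = 4 * (m:ℂ) ^ 4 := by
    exact_mod_cast hs6
  have hv_sc : (s:ℂ) ^ 3 * (ynp:ℂ) ^ 2 = 4 * (m:ℂ) ^ 2 + (s:ℂ) ^ 3 := by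
    exact_mod_cast hv_s
  have h13 : (s:ℂ) * lam₃ ^ 2 = -(s:ℂ) ^ 2 * lam₃ - (s:ℂ) ^ 3 / 2 - (m:ℂ) ^ 2 := by
    rw [hl3]
    linear_combination ((s:ℂ) ^ 3 * (ynp:ℂ) ^ 2 / 4) * Complex.I_sq - (1/4) * hv_sc
  have hs2cne : (s:ℂ) ^ 2 ≠ 0 := pow_ne_zero 2 (Complex.ofReal_ne_zero.mpr hs0.ne')
  have hq3 : lam₃ ^ 4 - 2 * (m:ℂ) ^ 2 * lam₃ - (m:ℂ) ^ 2 * (κ:ℂ) = 0 := by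
    have h2 : (s:ℂ) ^ 2 * (lam₃ ^ 4 - 2 * (m:ℂ) ^ 2 * lam₃ - (m:ℂ) ^ 2 * (κ:ℂ)) = 0 := by
      linear_combination ((s:ℂ) * lam₃ ^ 2 - (s:ℂ) ^ 2 * lam₃ + (s:ℂ) ^ 3 / 2 - (m:ℂ) ^ 2) * h13 - (1/4) * hs6c
    exact (mul_eq_zero.mp h2).resolve_left hs2cne
  have hq4 : lam₄ ^ 4 - 2 * (m:ℂ) ^ 2 * lam₄ - (m:ℂ) ^ 2 * (κ:ℂ) = 0 := by
    rw [hl4]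
    have := congrArg (starRingEnd ℂ) hq3
    simpa [map_sub, map_mul, map_pow, map_ofNat, Complex.conj_ofReal] using this
  -- part b
  have hlam1neg : lam₁ < 0 := by
    rw [hl1]; nlinarith [hs0, hu1]
  have hlam1gt : -κ / 2 < lam₁ := by
    have hne : lam₁ ≠ 0 := hlam1neg.ne
    have h4 : 0 < lam₁ ^ 4 := by positivity
    nlinarith [hq1, h4, pow_pos hm0 2]
  -- part c
  have hre : lam₃.re = -(1/2) * s := by
    rw [hl3]
    simp [Complex.mul_re, Complex.mul_im, Complex.sub_re, Complex.sub_im,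
      Complex.I_re, Complex.I_im, Complex.ofReal_re, Complex.ofReal_im]
  have hR3 : (2 * ((2:ℝ) ^ (-(2:ℝ)/3) * m ^ ((2:ℝ)/3))) ^ 3 = 2 * m ^ 2 := by
    have hCc : ((2:ℝ) ^ (-(2:ℝ)/3)) ^ 3 = 1/4 := by
      rw [← Real.rpow_natCast ((2:ℝ) ^ (-(2:ℝ)/3)) 3, ← Real.rpow_mul (by norm_num)]
      norm_num
    have hmc : (m ^ ((2:ℝ)/3)) ^ 3 = m ^ 2 := by
      rw [← Real.rpow_natCast (m ^ ((2:ℝ)/3)) 3, ← Real.rpow_mul hm0.le]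
      norm_num
    rw [mul_pow, mul_pow, hCc, hmc]
    ring
  have hRpos : 0 < (2:ℝ) ^ (-(2:ℝ)/3) * m ^ ((2:ℝ)/3) := by positivity
  have hslt : s < 2 * ((2:ℝ) ^ (-(2:ℝ)/3) * m ^ ((2:ℝ)/3)) := by
    have := (pow_lt_pow_iff_left₀ hs0.le (by positivity : (0:ℝ) ≤ 2 * ((2:ℝ) ^ (-(2:ℝ)/3) * m ^ ((2:ℝ)/3))) (three_ne_zero)).mp
    apply this
    rw [hR3]; exact hs3lt
  refine ⟨⟨?_, ?_, hq3, hq4⟩, ⟨hlam1gt, hlam1neg⟩, hre, ?_, ?_⟩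
  · exact_mod_cast congrArg (Complex.ofReal) hq1
  · exact_mod_cast congrArg (Complex.ofReal) hq2
  · rw [hre]; linarith
  · rw [hre]; linarith
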